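/- Let F be a complete nonarchimedean field of residual characteristic 0 and let r ∈ (0,1) lie outside the norm group |ℂ_F^×| of the completed algebraic closure of F. Then every nonzero g ∈ F⟨r/x, x/r⟩ factors as g = x^i g₁ g₂ with i ∈ ℤ, g₁ a unit of F⟨x/r⟩, and g₂ a unit of F⟨r/x⟩; consequently F⟨r/x, x/r⟩ is a field, equal to the completion of F(x) under the r-Gauss norm. -/

import Mathlib

set_option linter.unusedSectionVars false
set_option maxHeartbeats 1000000

section GNCFaux

variable {F : Type} [Field F] {C : Type} [CommRing C] [MetricSpace C]

abbrev GNCF.toA (a : ℤ →₀ F) : AddMonoidAlgebra F ℤ := AddMonoidAlgebra.ofCoeff a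

noncomputable def GNCF.Lam (fF : F →+* C) (X : Cˣ) : AddMonoidAlgebra F ℤ →+* C :=
  AddMonoidAlgebra.liftNCRingHom fF ((Units.coeHom C).comp (zpowersHom Cˣ X))
    fun _ _ => Commute.all _ _

theorem GNCF.Lam_apply (fF : F →+* C) (X : Cˣ) (a : ℤ →₀ F) :
    GNCF.Lam fF X (GNCF.toA a) = a.sum fun i c => fF c * ((X ^ i : Cˣ) : C) := rfl

theorem GNCF.mul_apply_eq_zero (a b : ℤ →₀ F) (i : ℤ)
    (h : ∀ k ∈ a.support, (0:ℤ) ≤ k) (h' : ∀ k ∈ b.support, (0:ℤ) ≤ k) (hi : i < 0) :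
    (GNCF.toA a * GNCF.toA b).coeff i = 0 := by
  by_contra hne
  have hmem : i ∈ (GNCF.toA a * GNCF.toA b).coeff.support := Finsupp.mem_support_iff.2 hne
  have := AddMonoidAlgebra.support_coeff_mul_subset (GNCF.toA a) (GNCF.toA b) hmem
  rw [Finset.mem_add] at this
  obtain ⟨x, hx, y, hy, rfl⟩ := this
  have := add_nonneg (h x hx) (h' y hy)
  omega

theorem GNCF.mul_apply_eq_zero' (a b : ℤ →₀ F) (i : ℤ)
    (h : ∀ k ∈ a.support, k ≤ (0:ℤ)) (h' : ∀ k ∈ b.support, k ≤ (0:ℤ)) (hi : 0 < i) :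
    (GNCF.toA a * GNCF.toA b).coeff i = 0 := by
  by_contra hne
  have hmem : i ∈ (GNCF.toA a * GNCF.toA b).coeff.support := Finsupp.mem_support_iff.2 hne
  have := AddMonoidAlgebra.support_coeff_mul_subset (GNCF.toA a) (GNCF.toA b) hmem
  rw [Finset.mem_add] at this
  obtain ⟨x, hx, y, hy, rfl⟩ := this
  have := add_nonpos (h x hx) (h' y hy)
  omega

theorem GNCF.single_mul (k : ℤ) (x : F) (a : ℤ →₀ F) (i : ℤ) :
    (GNCF.toA (Finsupp.single k x) * GNCF.toA a).coeff i = x * a (i - k) := by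
  have := AddMonoidAlgebra.coeff_single_mul_apply (R := F) (G := ℤ) (GNCF.toA a) x k i
  rw [show GNCF.toA (Finsupp.single k x) = AddMonoidAlgebra.single k x from rfl, this,
    sub_eq_neg_add]

noncomputable def GNCF.gSup (ν : F → ℝ) (r : ℝ) (a : ℤ →₀ F) : ℝ := ⨆ i : ℤ, ν (a i) * r ^ i

theorem GNCF.gSup_bdd (ν : F → ℝ) (r : ℝ) (hν0 : ν 0 = 0) (a : ℤ →₀ F) :
    BddAbove (Set.range fun i : ℤ => ν (a i) * r ^ i) := by
  apply Set.Finite.bddAbove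
  apply Set.Finite.subset
    (Set.Finite.insert 0 (a.support.finite_toSet.image fun i => ν (a i) * r ^ i))
  rintro _ ⟨i, rfl⟩
  by_cases h : a i = 0
  · exact Or.inl (by show ν (a i) * r ^ i = 0; rw [h, hν0, zero_mul])
  · exact Or.inr (Set.mem_image_of_mem _ (Finsupp.mem_support_iff.2 h))

theorem GNCF.le_gSup (ν : F → ℝ) (r : ℝ) (hν0 : ν 0 = 0) (a : ℤ →₀ F) (i : ℤ) :
    ν (a i) * r ^ i ≤ GNCF.gSup ν r a :=
  le_ciSup (GNCF.gSup_bdd ν r hν0 a) i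

theorem GNCF.gSup_le (ν : F → ℝ) (r : ℝ) (a : ℤ →₀ F) {B : ℝ}
    (h : ∀ i : ℤ, ν (a i) * r ^ i ≤ B) : GNCF.gSup ν r a ≤ B := ciSup_le h

theorem GNCF.gSup_nonneg (ν : F → ℝ) (r : ℝ) (hν0 : ν 0 = 0) (hνnn : ∀ x : F, 0 ≤ ν x)
    (hr0 : 0 < r) (a : ℤ →₀ F) : 0 ≤ GNCF.gSup ν r a :=
  le_trans (mul_nonneg (hνnn _) (zpow_pos hr0 0).le) (GNCF.le_gSup ν r hν0 a 0)

theorem GNCF.gSup_zero (ν : F → ℝ) (r : ℝ) (hν0 : ν 0 = 0) : GNCF.gSup ν r 0 = 0 := by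
  unfold GNCF.gSup
  simp only [Finsupp.coe_zero, Pi.zero_apply, hν0, zero_mul, ciSup_const]

theorem GNCF.gSup_exists_max (ν : F → ℝ) (r : ℝ) (hν0 : ν 0 = 0) (hνnn : ∀ x : F, 0 ≤ ν x)
    (hr0 : 0 < r) (a : ℤ →₀ F) (ha : a ≠ 0) :
    ∃ j ∈ a.support, GNCF.gSup ν r a = ν (a j) * r ^ j ∧
      ∀ i ∈ a.support, ν (a i) * r ^ i ≤ ν (a j) * r ^ j := by
  obtain ⟨j, hj, hmax⟩ := a.support.exists_max_image (fun i => ν (a i) * r ^ i)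
    (Finsupp.support_nonempty_iff.2 ha)
  refine ⟨j, hj, le_antisymm (GNCF.gSup_le ν r a fun i => ?_) (GNCF.le_gSup ν r hν0 a j), hmax⟩
  by_cases h : a i = 0
  · rw [h, hν0, zero_mul]
    exact mul_nonneg (hνnn _) (zpow_pos hr0 j).le
  · exact hmax i (Finsupp.mem_support_iff.2 h)

theorem GNCF.gSup_single (ν : F → ℝ) (r : ℝ) (hν0 : ν 0 = 0) (hνnn : ∀ x : F, 0 ≤ ν x)
    (hr0 : 0 < r) (k : ℤ) (x : F) :
    GNCF.gSup ν r (Finsupp.single k x) = ν x * r ^ k := by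
  refine le_antisymm (GNCF.gSup_le ν r _ fun i => ?_) ?_
  · rcases eq_or_ne i k with rfl | hik
    · rw [Finsupp.single_eq_same]
    · rw [Finsupp.single_eq_of_ne' (Ne.symm hik), hν0, zero_mul]
      exact mul_nonneg (hνnn _) (zpow_pos hr0 k).le
  · have := GNCF.le_gSup ν r hν0 (Finsupp.single k x) k
    rwa [Finsupp.single_eq_same] at this

theorem GNCF.gSup_filter_le (ν : F → ℝ) (r : ℝ) (hν0 : ν 0 = 0) (hνnn : ∀ x : F, 0 ≤ ν x)
    (hr0 : 0 < r) (p : ℤ → Prop) [DecidablePred p] (a : ℤ →₀ F) :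
    GNCF.gSup ν r (a.filter p) ≤ GNCF.gSup ν r a := by
  refine GNCF.gSup_le ν r _ fun i => ?_
  rw [Finsupp.filter_apply]
  split_ifs
  · exact GNCF.le_gSup ν r hν0 a i
  · rw [hν0, zero_mul]
    exact GNCF.gSup_nonneg ν r hν0 hνnn hr0 a

end GNCFaux

section GNCFmetric

open Filter Topology

variable {C : Type} [CommRing C] [MetricSpace C]

theorem GNCF.nu_dist (νC : C → ℝ) (hdist : ∀ y z : C, dist y z = νC (y - z)) (y : C) :
    νC y = dist y 0 := by rw [hdist, sub_zero]

theorem GNCF.nu_nonneg (νC : C → ℝ) (hdist : ∀ y z : C, dist y z = νC (y - z)) (y : C) :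
    0 ≤ νC y := by rw [GNCF.nu_dist νC hdist]; exact dist_nonneg

theorem GNCF.nu_eq_zero (νC : C → ℝ) (hdist : ∀ y z : C, dist y z = νC (y - z)) (y : C) :
    νC y = 0 ↔ y = 0 := by rw [GNCF.nu_dist νC hdist]; exact dist_eq_zero

theorem GNCF.nu_neg (νC : C → ℝ) (hdist : ∀ y z : C, dist y z = νC (y - z)) (y : C) :
    νC (-y) = νC y := by
  have h1 := hdist 0 y
  have h2 := hdist y 0
  rw [zero_sub] at h1
  rw [sub_zero] at h2
  rw [← h1, ← h2, dist_comm]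

theorem GNCF.nu_sub_rev (νC : C → ℝ) (hdist : ∀ y z : C, dist y z = νC (y - z)) (y z : C) :
    νC (y - z) = νC (z - y) := by
  rw [← hdist, ← hdist, dist_comm]

theorem GNCF.nu_cont (νC : C → ℝ) (hdist : ∀ y z : C, dist y z = νC (y - z)) :
    Continuous νC := by
  have : νC = fun y => dist y 0 := funext fun y => GNCF.nu_dist νC hdist y
  rw [this]
  exact Continuous.dist continuous_id continuous_const

theorem GNCF.nu_add_le (νC : C → ℝ) (hdist : ∀ y z : C, dist y z = νC (y - z)) (y z : C) :
    νC (y + z) ≤ νC y + νC z := by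
  have h1 := hdist (y + z) z
  have h2 := dist_triangle (y + z) z 0
  rw [add_sub_cancel_right] at h1
  rw [← GNCF.nu_dist νC hdist, ← h1, ← GNCF.nu_dist νC hdist] at *
  linarith [h2]

theorem GNCF.tendsto_add (νC : C → ℝ) (hdist : ∀ y z : C, dist y z = νC (y - z))
    {u v : ℕ → C} {x y : C} (hu : Tendsto u atTop (𝓝 x)) (hv : Tendsto v atTop (𝓝 y)) :
    Tendsto (fun n => u n + v n) atTop (𝓝 (x + y)) := by
  rw [tendsto_iff_dist_tendsto_zero] at *
  apply squeeze_zero (fun n => dist_nonneg)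
    (g := fun n => dist (u n) x + dist (v n) y)
  · intro n
    rw [hdist, show u n + v n - (x + y) = (u n - x) + (v n - y) by ring]
    calc νC ((u n - x) + (v n - y)) ≤ νC (u n - x) + νC (v n - y) :=
          GNCF.nu_add_le νC hdist _ _
      _ = dist (u n) x + dist (v n) y := by rw [hdist, hdist]
  · simpa using hu.add hv

theorem GNCF.tendsto_mul (νC : C → ℝ) (hdist : ∀ y z : C, dist y z = νC (y - z))
    (hνCmul : ∀ y z : C, νC (y * z) ≤ νC y * νC z)
    {u v : ℕ → C} {x y : C} (hu : Tendsto u atTop (𝓝 x)) (hv : Tendsto v atTop (𝓝 y)) :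
    Tendsto (fun n => u n * v n) atTop (𝓝 (x * y)) := by
  rw [tendsto_iff_dist_tendsto_zero] at *
  apply squeeze_zero (fun n => dist_nonneg)
    (g := fun n => νC (u n) * dist (v n) y + dist (u n) x * νC y)
  · intro n
    rw [hdist, show u n * v n - x * y = u n * (v n - y) + (u n - x) * y by ring]
    calc νC (u n * (v n - y) + (u n - x) * y)
        ≤ νC (u n * (v n - y)) + νC ((u n - x) * y) := GNCF.nu_add_le νC hdist _ _
      _ ≤ νC (u n) * νC (v n - y) + νC (u n - x) * νC y := by
          gcongr <;> [exact hνCmul _ _; exact hνCmul _ _]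
      _ = νC (u n) * dist (v n) y + dist (u n) x * νC y := by rw [hdist, hdist]
  · have h1 : Tendsto (fun n => νC (u n)) atTop (𝓝 (νC x)) := by
      have := (GNCF.nu_cont νC hdist).tendsto x
      exact this.comp (tendsto_iff_dist_tendsto_zero.2 hu)
    have : Tendsto (fun n => νC (u n) * dist (v n) y + dist (u n) x * νC y) atTop
        (𝓝 (νC x * 0 + 0 * νC y)) := (h1.mul hv).add (hu.mul tendsto_const_nhds)
    simpa using this

end GNCFmetric

section GNCFs3
open Filter Topology

variable {F : Type} [Field F] {C : Type} [CommRing C] [MetricSpace C]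

theorem GNCF.Lam_add (fF : F →+* C) (X : Cˣ) (a b : ℤ →₀ F) :
    ((a + b).sum fun i c => fF c * ((X ^ i : Cˣ) : C)) =
      (a.sum fun i c => fF c * ((X ^ i : Cˣ) : C)) +
      (b.sum fun i c => fF c * ((X ^ i : Cˣ) : C)) :=
  Finsupp.sum_add_index' (fun i => by simp) (fun i c₁ c₂ => by rw [map_add, add_mul])

theorem GNCF.ultra (ν : F → ℝ) (r : ℝ) (νC : C → ℝ)
    (hdist : ∀ y z : C, dist y z = νC (y - z)) (fF : F →+* C) (X : Cˣ)
    (hν0 : ν 0 = 0) (hνadd : ∀ x y : F, ν (x + y) ≤ max (ν x) (ν y))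
    (hνnn : ∀ x : F, 0 ≤ ν x) (hr0 : 0 < r)
    (hGauss : ∀ a : ℤ →₀ F,
      νC (a.sum fun i c => fF c * ((X ^ i : Cˣ) : C)) = GNCF.gSup ν r a)
    (hdense : DenseRange fun a : ℤ →₀ F => a.sum fun i c => fF c * ((X ^ i : Cˣ) : C)) :
    ∀ y z : C, νC (y + z) ≤ max (νC y) (νC z) := by
  set Λf := fun a : ℤ →₀ F => a.sum fun i c => fF c * ((X ^ i : Cˣ) : C) with hΛf
  have hlaurent : ∀ a b : ℤ →₀ F, νC (Λf a + Λf b) ≤ max (νC (Λf a)) (νC (Λf b)) := by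
    intro a b
    rw [show Λf a + Λf b = Λf (a + b) from (GNCF.Lam_add fF X a b).symm,
      hGauss, hGauss, hGauss]
    refine GNCF.gSup_le ν r _ fun i => ?_
    have h1 : ν ((a + b) i) * r ^ i ≤ max (ν (a i) * r ^ i) (ν (b i) * r ^ i) := by
      rw [← max_mul_of_nonneg _ _ (zpow_pos hr0 i).le, Finsupp.add_apply]
      exact mul_le_mul_of_nonneg_right (hνadd _ _) (zpow_pos hr0 i).le
    exact h1.trans (max_le_max (GNCF.le_gSup ν r hν0 a i) (GNCF.le_gSup ν r hν0 b i))
  intro y z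
  obtain ⟨u, hu, huy⟩ := mem_closure_iff_seq_limit.1 (hdense y)
  obtain ⟨v, hv, hvz⟩ := mem_closure_iff_seq_limit.1 (hdense z)
  choose aseq ha using hu
  choose bseq hb using hv
  have hay : Tendsto (fun n => Λf (aseq n)) atTop (𝓝 y) := by
    simpa only [ha] using huy
  have hbz : Tendsto (fun n => Λf (bseq n)) atTop (𝓝 z) := by
    simpa only [hb] using hvz
  have t1 : Tendsto (fun n => νC (Λf (aseq n) + Λf (bseq n))) atTop (𝓝 (νC (y + z))) :=
    ((GNCF.nu_cont νC hdist).tendsto _).comp (GNCF.tendsto_add νC hdist hay hbz)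
  have t2 : Tendsto (fun n => max (νC (Λf (aseq n))) (νC (Λf (bseq n)))) atTop
      (𝓝 (max (νC y) (νC z))) :=
    (((GNCF.nu_cont νC hdist).tendsto _).comp hay).max
      (((GNCF.nu_cont νC hdist).tendsto _).comp hbz)
  exact le_of_tendsto_of_tendsto' t1 t2 fun n => hlaurent _ _

theorem GNCF.iso (νC : C → ℝ) (hdist : ∀ y z : C, dist y z = νC (y - z))
    (hultra : ∀ y z : C, νC (y + z) ≤ max (νC y) (νC z))
    (y z : C) (h : νC (y - z) < νC z) : νC y = νC z := by
  have h1 : νC y ≤ νC z := by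
    have := hultra (y - z) z
    rw [sub_add_cancel] at this
    exact this.trans (max_le h.le le_rfl)
  rcases h1.lt_or_eq with h2 | h2
  · exfalso
    have := hultra y (z - y)
    rw [add_sub_cancel] at this
    rw [GNCF.nu_sub_rev νC hdist z y] at this
    exact absurd (this.trans_lt (max_lt h2 h)) (lt_irrefl _)
  · exact h2

theorem GNCF.nu_le_one_of_close (νC : C → ℝ)
    (hultra : ∀ y z : C, νC (y + z) ≤ max (νC y) (νC z))
    (hνC1 : νC (1 : C) = 1) (x : C) {δ : ℝ} (hδ : δ ≤ 1) (h : νC (x - 1) ≤ δ) : νC x ≤ 1 := by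
  have := hultra (x - 1) 1
  rw [sub_add_cancel] at this
  exact this.trans (max_le (h.trans hδ) hνC1.le)

theorem GNCF.geom [CompleteSpace C] (νC : C → ℝ)
    (hdist : ∀ y z : C, dist y z = νC (y - z))
    (hνCmul : ∀ y z : C, νC (y * z) ≤ νC y * νC z)
    (hultra : ∀ y z : C, νC (y + z) ≤ max (νC y) (νC z))
    (hνC1 : νC (1 : C) = 1)
    (S : Set C) (hScl : IsClosed S) (h1S : (1 : C) ∈ S)
    (haddS : ∀ x ∈ S, ∀ y ∈ S, x + y ∈ S) (hmulS : ∀ x ∈ S, ∀ y ∈ S, x * y ∈ S)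
    (hnegS : ∀ x ∈ S, -x ∈ S)
    (w : C) (hw : w ∈ S) (hw1 : νC w < 1) :
    ∃ v ∈ S, (1 + w) * v = 1 ∧ νC (v - 1) ≤ νC w := by
  have hq0 : 0 ≤ νC w := GNCF.nu_nonneg νC hdist w
  set q := νC w with hq
  set s : ℕ → C := fun n => ∑ k ∈ Finset.range n, (-w) ^ k with hs
  have hsucc : ∀ n, s (n + 1) = s n + (-w) ^ n := by
    intro n; simp only [hs]; exact Finset.sum_range_succ _ n
  have hpowS : ∀ n : ℕ, (-w) ^ n ∈ S := by
    intro n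
    induction n with
    | zero => simpa using h1S
    | succ n ih => rw [pow_succ]; exact hmulS _ ih _ (hnegS w hw)
  have hsS : ∀ n, s n ∈ S := by
    intro n
    induction n with
    | zero =>
        have : s 0 = 1 + (-1) := by simp [hs]

        rw [this]; exact haddS _ h1S _ (hnegS _ h1S)
    | succ n ih => rw [hsucc]; exact haddS _ ih _ (hpowS n)
  have hpow : ∀ n : ℕ, νC ((-w) ^ n) ≤ q ^ n := by
    intro n
    induction n with
    | zero => simp [hνC1]
    | succ n ih =>
        rw [pow_succ, pow_succ]
        calc νC ((-w) ^ n * -w) ≤ νC ((-w) ^ n) * νC (-w) := hνCmul _ _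
          _ = νC ((-w) ^ n) * q := by rw [GNCF.nu_neg νC hdist]
          _ ≤ q ^ n * q := mul_le_mul_of_nonneg_right ih hq0
  have hcauchy : CauchySeq s := by
    apply cauchySeq_of_le_geometric q 1 hw1
    intro n
    rw [hdist]
    have : s n - s (n + 1) = -((-w) ^ n) := by
      rw [hsucc]; ring
    rw [this, GNCF.nu_neg νC hdist]
    calc νC ((-w) ^ n) ≤ q ^ n := hpow n
      _ = 1 * q ^ n := (one_mul _).symm
  obtain ⟨v, hv⟩ := cauchySeq_tendsto_of_complete hcauchy
  have hvS : v ∈ S := hScl.mem_of_tendsto hv (Filter.Eventually.of_forall hsS)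
  have hgeom : ∀ n, (1 + w) * s n = 1 - (-w) ^ n := by
    intro n
    have h := geom_sum_mul (-w) n
    rw [hs]
    linear_combination -h
  have hlim1 : Tendsto (fun n => (1 + w) * s n) atTop (𝓝 ((1 + w) * v)) :=
    GNCF.tendsto_mul νC hdist hνCmul tendsto_const_nhds hv
  have hlim2 : Tendsto (fun n => (1 + w) * s n) atTop (𝓝 1) := by
    rw [tendsto_iff_dist_tendsto_zero]
    apply squeeze_zero (fun n => dist_nonneg) (g := fun n => q ^ n)
    · intro n
      rw [hdist, hgeom n, show (1 : C) - (-w) ^ n - 1 = -((-w) ^ n) by ring,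
        GNCF.nu_neg νC hdist]
      exact hpow n
    · exact tendsto_pow_atTop_nhds_zero_of_lt_one hq0 hw1
  have hinv : (1 + w) * v = 1 := tendsto_nhds_unique hlim1 hlim2
  have hbound : ∀ n, νC (s (n + 1) - 1) ≤ q := by
    intro n
    induction n with
    | zero =>
        have : s 1 - 1 = 0 := by
          rw [hsucc 0]; simp [hs]
        rw [this]
        have : νC (0 : C) = 0 := (GNCF.nu_eq_zero νC hdist 0).2 rfl
        rw [this]; exact hq0
    | succ n ih =>
        have hsplit : s (n + 2) - 1 = (s (n + 1) - 1) + (-w) ^ (n + 1) := by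
          rw [hsucc (n + 1)]; ring
        rw [hsplit]
        refine (hultra _ _).trans (max_le ih ((hpow (n + 1)).trans ?_))
        calc q ^ (n + 1) ≤ q ^ 1 := pow_le_pow_of_le_one hq0 hw1.le (by omega)
          _ = q := pow_one q
  have hlim3 : Tendsto (fun n => νC (s (n + 1) - 1)) atTop (𝓝 (νC (v - 1))) := by
    have hshift : Tendsto (fun n => s (n + 1)) atTop (𝓝 v) :=
      hv.comp (tendsto_add_atTop_nat 1)
    have : Tendsto (fun n => s (n + 1) + (-1 : C)) atTop (𝓝 (v + (-1))) :=
      GNCF.tendsto_add νC hdist hshift tendsto_const_nhds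
    have := ((GNCF.nu_cont νC hdist).tendsto _).comp this
    simpa [sub_eq_add_neg, Function.comp_def] using this
  exact ⟨v, hvS, hinv, le_of_tendsto hlim3 (Filter.Eventually.of_forall hbound)⟩

end GNCFs3

section GNCFirr
variable {F : Type} [Field F]

theorem GNCF.irr_ne (ν : F → ℝ) (r : ℝ) (hν0 : ∀ x : F, ν x = 0 ↔ x = 0)
    (hνmul : ∀ x y : F, ν (x * y) = ν x * ν y) (hr0 : 0 < r)
    (hirr : ∀ (n : ℕ) (a : F), 0 < n → a ≠ 0 → r ^ n ≠ ν a)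
    (x y : F) (i k : ℤ) (hx : x ≠ 0) (hy : y ≠ 0) (hik : i ≠ k) :
    ν x * r ^ i ≠ ν y * r ^ k := by
  have hν1 : ν 1 = 1 := by
    have h1 := hνmul 1 1
    rw [mul_one] at h1
    have h2 : ν 1 ≠ 0 := fun h => one_ne_zero ((hν0 1).1 h)
    exact mul_left_cancel₀ h2 (by linear_combination -h1)
  have aux : ∀ (x y : F) (i k : ℤ), x ≠ 0 → y ≠ 0 → i < k → ν x * r ^ i ≠ ν y * r ^ k := by
    intro x y i k hx hy hik heq
    have hy0 : ν y ≠ 0 := fun h => hy ((hν0 y).1 h)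
    have hyinv : ν y⁻¹ = (ν y)⁻¹ := by
      have h1 : ν y * ν y⁻¹ = 1 := by rw [← hνmul, mul_inv_cancel₀ hy, hν1]
      exact eq_inv_of_mul_eq_one_right h1
    have hri : (r : ℝ) ^ i ≠ 0 := zpow_ne_zero i hr0.ne'
    have hkey : ν (x * y⁻¹) = r ^ (k - i) := by
      rw [hνmul, hyinv]
      rw [zpow_sub₀ hr0.ne']
      field_simp
      linear_combination heq
    set n := (k - i).toNat with hn
    have hn0 : 0 < n := by omega
    have hnz : (n : ℤ) = k - i := by omega
    have : r ^ n = ν (x * y⁻¹) := by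
      rw [hkey, ← hnz, zpow_natCast]
    exact hirr n (x * y⁻¹) hn0 (mul_ne_zero hx (inv_ne_zero hy)) this
  rcases lt_or_gt_of_ne hik with h | h
  · exact aux x y i k hx hy h
  · exact fun heq => aux y x k i hy hx h heq.symm

end GNCFirr

open Filter Topology in
theorem gauss_norm_completion_factorization
    (F : Type) [Field F] [CharZero F]
    (ν : F → ℝ)
    (hν0 : ∀ x : F, ν x = 0 ↔ x = 0)
    (hνmul : ∀ x y : F, ν (x * y) = ν x * ν y)
    (hνadd : ∀ x y : F, ν (x + y) ≤ max (ν x) (ν y))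
    (hres : ∀ n : ℕ, n ≠ 0 → ν (n : F) = 1)
    (r : ℝ) (hr0 : 0 < r) (hr1 : r < 1)
    (hirr : ∀ (n : ℕ) (a : F), 0 < n → a ≠ 0 → r ^ n ≠ ν a)
    (C : Type) [CommRing C] [MetricSpace C] [CompleteSpace C]
    (νC : C → ℝ)
    (hdist : ∀ y z : C, dist y z = νC (y - z))
    (hνCmul : ∀ y z : C, νC (y * z) ≤ νC y * νC z)
    (fF : F →+* C) (hfF : ∀ a : F, νC (fF a) = ν a)
    (X : Cˣ)
    (hGauss : ∀ a : ℤ →₀ F,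
      νC (a.sum fun i c => fF c * ((X ^ i : Cˣ) : C)) = ⨆ i : ℤ, ν (a i) * r ^ i)
    (hdense : DenseRange fun a : ℤ →₀ F =>
      a.sum fun i c => fF c * ((X ^ i : Cˣ) : C)) :
    (∀ g : C, g ≠ 0 → ∃ (i : ℤ) (g₁ g₂ : C),
      g = ((X ^ i : Cˣ) : C) * g₁ * g₂ ∧
      g₁ ∈ closure ((fun a : ℤ →₀ F => a.sum fun i c => fF c * ((X ^ i : Cˣ) : C)) ''
        {a | ∀ i : ℤ, i < 0 → a i = 0}) ∧
      (∃ h₁ ∈ closure ((fun a : ℤ →₀ F => a.sum fun i c => fF c * ((X ^ i : Cˣ) : C)) ''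
        {a | ∀ i : ℤ, i < 0 → a i = 0}), g₁ * h₁ = 1) ∧
      g₂ ∈ closure ((fun a : ℤ →₀ F => a.sum fun i c => fF c * ((X ^ i : Cˣ) : C)) ''
        {a | ∀ i : ℤ, 0 < i → a i = 0}) ∧
      (∃ h₂ ∈ closure ((fun a : ℤ →₀ F => a.sum fun i c => fF c * ((X ^ i : Cˣ) : C)) ''
        {a | ∀ i : ℤ, 0 < i → a i = 0}), g₂ * h₂ = 1)) ∧
    IsField C := by
  set Λf : (ℤ →₀ F) → C := fun a : ℤ →₀ F => a.sum fun i c => fF c * ((X ^ i : Cˣ) : C)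
    with hΛf
  -- basic facts about ν
  have hν0' : ν 0 = 0 := (hν0 0).2 rfl
  have hν1 : ν 1 = 1 := by
    have h1 := hνmul 1 1
    rw [mul_one] at h1
    have h2 : ν 1 ≠ 0 := fun h => one_ne_zero ((hν0 1).1 h)
    exact mul_left_cancel₀ h2 (by linear_combination -h1)
  have hνnn : ∀ x : F, 0 ≤ ν x := fun x => by
    rw [← hfF]; exact GNCF.nu_nonneg νC hdist _
  have hνC1 : νC (1 : C) = 1 := by rw [← map_one fF, hfF, hν1]
  have hG : ∀ a : ℤ →₀ F, νC (Λf a) = GNCF.gSup ν r a := hGauss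
  have hultra : ∀ y z : C, νC (y + z) ≤ max (νC y) (νC z) := by
    have hG' := hG
    have hdense' := hdense
    rw [hΛf] at hG' hdense'
    exact GNCF.ultra ν r νC hdist fF X hν0' hνadd hνnn hr0 hG' hdense'
  have hLam : ∀ a : ℤ →₀ F, Λf a = GNCF.Lam fF X (GNCF.toA a) := fun a =>
    by rw [hΛf]; exact (GNCF.Lam_apply fF X a).symm
  have hΛadd : ∀ a b : ℤ →₀ F, Λf (a + b) = Λf a + Λf b := fun a b => by
    rw [hΛf]; exact GNCF.Lam_add fF X a b
  have hΛsub : ∀ a b : ℤ →₀ F, Λf (a - b) = Λf a - Λf b := fun a b => by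
    rw [hLam, hLam, hLam]
    exact map_sub (GNCF.Lam fF X) (GNCF.toA a) (GNCF.toA b)
  have hone : Λf (Finsupp.single 0 1) = 1 := by
    rw [hΛf]
    show (Finsupp.single (0:ℤ) (1:F)).sum (fun i c => fF c * ((X ^ i : Cˣ) : C)) = 1
    rw [Finsupp.sum_single_index (by simp)]
    simp
  have hsingle : ∀ (k : ℤ) (x : F), Λf (Finsupp.single k x) = fF x * ((X ^ k : Cˣ) : C) := by
    intro k x
    rw [hΛf]
    show (Finsupp.single k x).sum (fun i c => fF c * ((X ^ i : Cˣ) : C)) = _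
    rw [Finsupp.sum_single_index (by simp)]
  -- the subrings
  set R₁ : Set C := Λf '' {a | ∀ i : ℤ, i < 0 → a i = 0} with hR₁
  set R₂ : Set C := Λf '' {a | ∀ i : ℤ, 0 < i → a i = 0} with hR₂
  have hR₁one : (1 : C) ∈ R₁ := by
    refine ⟨Finsupp.single 0 1, fun i hi => Finsupp.single_eq_of_ne (by omega), hone⟩
  have hR₂one : (1 : C) ∈ R₂ := by
    refine ⟨Finsupp.single 0 1, fun i hi => Finsupp.single_eq_of_ne (by omega), hone⟩
  have hR₁mul : ∀ x ∈ R₁, ∀ y ∈ R₁, x * y ∈ R₁ := by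
    rintro _ ⟨a, ha, rfl⟩ _ ⟨b, hb, rfl⟩
    refine ⟨(GNCF.toA a * GNCF.toA b : AddMonoidAlgebra F ℤ).coeff, ?_, ?_⟩
    · intro i hi
      refine GNCF.mul_apply_eq_zero a b i ?_ ?_ hi
      · intro k hk
        by_contra hneg
        exact Finsupp.mem_support_iff.1 hk (ha k (by omega))
      · intro k hk
        by_contra hneg
        exact Finsupp.mem_support_iff.1 hk (hb k (by omega))
    · rw [hLam, hLam, hLam, map_mul]
  have hR₂mul : ∀ x ∈ R₂, ∀ y ∈ R₂, x * y ∈ R₂ := by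
    rintro _ ⟨a, ha, rfl⟩ _ ⟨b, hb, rfl⟩
    refine ⟨(GNCF.toA a * GNCF.toA b : AddMonoidAlgebra F ℤ).coeff, ?_, ?_⟩
    · intro i hi
      refine GNCF.mul_apply_eq_zero' a b i ?_ ?_ hi
      · intro k hk
        by_contra hneg
        exact Finsupp.mem_support_iff.1 hk (ha k (by omega))
      · intro k hk
        by_contra hneg
        exact Finsupp.mem_support_iff.1 hk (hb k (by omega))
    · rw [hLam, hLam, hLam, map_mul]
  have hR₁add : ∀ x ∈ R₁, ∀ y ∈ R₁, x + y ∈ R₁ := by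
    rintro _ ⟨a, ha, rfl⟩ _ ⟨b, hb, rfl⟩
    exact ⟨a + b, fun i hi => by rw [Finsupp.add_apply, ha i hi, hb i hi, add_zero],
      hΛadd a b⟩
  have hR₂add : ∀ x ∈ R₂, ∀ y ∈ R₂, x + y ∈ R₂ := by
    rintro _ ⟨a, ha, rfl⟩ _ ⟨b, hb, rfl⟩
    exact ⟨a + b, fun i hi => by rw [Finsupp.add_apply, ha i hi, hb i hi, add_zero],
      hΛadd a b⟩
  have hR₁neg : ∀ x ∈ R₁, -x ∈ R₁ := by
    rintro _ ⟨a, ha, rfl⟩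
    refine ⟨-a, fun i hi => by rw [Finsupp.neg_apply, ha i hi, neg_zero], ?_⟩
    rw [hLam, hLam]
    exact map_neg (GNCF.Lam fF X) (GNCF.toA a)
  have hR₂neg : ∀ x ∈ R₂, -x ∈ R₂ := by
    rintro _ ⟨a, ha, rfl⟩
    refine ⟨-a, fun i hi => by rw [Finsupp.neg_apply, ha i hi, neg_zero], ?_⟩
    rw [hLam, hLam]
    exact map_neg (GNCF.Lam fF X) (GNCF.toA a)
  -- closure closure properties
  have hclmul : ∀ (R : Set C), (∀ x ∈ R, ∀ y ∈ R, x * y ∈ R) →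
      ∀ x ∈ closure R, ∀ y ∈ closure R, x * y ∈ closure R := by
    intro R hR x hx y hy
    obtain ⟨u, hu, hux⟩ := mem_closure_iff_seq_limit.1 hx
    obtain ⟨v, hv, hvy⟩ := mem_closure_iff_seq_limit.1 hy
    exact isClosed_closure.mem_of_tendsto (GNCF.tendsto_mul νC hdist hνCmul hux hvy)
      (Filter.Eventually.of_forall fun n => subset_closure (hR _ (hu n) _ (hv n)))
  have hcladd : ∀ (R : Set C), (∀ x ∈ R, ∀ y ∈ R, x + y ∈ R) →
      ∀ x ∈ closure R, ∀ y ∈ closure R, x + y ∈ closure R := by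
    intro R hR x hx y hy
    obtain ⟨u, hu, hux⟩ := mem_closure_iff_seq_limit.1 hx
    obtain ⟨v, hv, hvy⟩ := mem_closure_iff_seq_limit.1 hy
    exact isClosed_closure.mem_of_tendsto (GNCF.tendsto_add νC hdist hux hvy)
      (Filter.Eventually.of_forall fun n => subset_closure (hR _ (hu n) _ (hv n)))
  have hclneg : ∀ (R : Set C), (∀ x ∈ R, -x ∈ R) →
      ∀ x ∈ closure R, -x ∈ closure R := by
    intro R hR x hx
    obtain ⟨u, hu, hux⟩ := mem_closure_iff_seq_limit.1 hx
    have : Tendsto (fun n => (-1 : C) * u n) atTop (𝓝 ((-1) * x)) :=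
      GNCF.tendsto_mul νC hdist hνCmul tendsto_const_nhds hux
    simp only [neg_one_mul] at this
    exact isClosed_closure.mem_of_tendsto this
      (Filter.Eventually.of_forall fun n => subset_closure (hR _ (hu n)))
  -- Step 1: reduction to an element close to 1
  have key : ∀ g : C, g ≠ 0 → ∃ (j : ℤ) (c : F), c ≠ 0 ∧
      νC (g * fF c⁻¹ * ((X ^ (-j) : Cˣ) : C) - 1) < 1 := by
    intro g hg
    have ht : 0 < νC g :=
      lt_of_le_of_ne (GNCF.nu_nonneg νC hdist g)
        (Ne.symm (fun h => hg ((GNCF.nu_eq_zero νC hdist g).1 h)))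
    obtain ⟨a, ha⟩ : ∃ a : ℤ →₀ F, νC (g - Λf a) < νC g := by
      obtain ⟨a, ha⟩ := Metric.denseRange_iff.1 hdense g (νC g) ht
      exact ⟨a, by rw [hdist] at ha; exact ha⟩
    have hΛag : νC (Λf a) = νC g :=
      GNCF.iso νC hdist hultra _ _ (by rwa [GNCF.nu_sub_rev νC hdist])
    have ha0 : a ≠ 0 := by
      rintro rfl
      rw [hG, GNCF.gSup_zero ν r hν0'] at hΛag
      exact ht.ne' hΛag.symm
    obtain ⟨j, hjsup, hjeq, hjmax⟩ := GNCF.gSup_exists_max ν r hν0' hνnn hr0 a ha0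
    have hc : a j ≠ 0 := Finsupp.mem_support_iff.1 hjsup
    refine ⟨j, a j, hc, ?_⟩
    set c := a j with hcdef
    have hνcinv : ν c⁻¹ = (ν c)⁻¹ := by
      have h1 : ν c * ν c⁻¹ = 1 := by rw [← hνmul, mul_inv_cancel₀ hc, hν1]
      exact eq_inv_of_mul_eq_one_right h1
    set u : C := fF c⁻¹ * ((X ^ (-j) : Cˣ) : C) with hu
    have hXu : g * fF c⁻¹ * ((X ^ (-j) : Cˣ) : C) = g * u := by rw [hu, mul_assoc]
    rw [hXu]
    have hΛsingle : Λf (Finsupp.single (-j) c⁻¹) = u := by rw [hsingle, hu]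
    set t := ν c * r ^ j with htdef
    have htt : νC g = t := by rw [← hΛag, hG, hjeq]
    have ht' : 0 < t := htt ▸ ht
    have hνu : νC u = t⁻¹ := by
      rw [← hΛsingle, hG, GNCF.gSup_single ν r hν0' hνnn hr0, hνcinv, zpow_neg, htdef,
        mul_inv]
    have hdecomp : g * u - 1 = (g - Λf a) * u + (Λf a * u - 1) := by ring
    -- the second term
    set m : ℤ →₀ F := (GNCF.toA (Finsupp.single (-j) c⁻¹) * GNCF.toA a : AddMonoidAlgebra F ℤ).coeff
      with hm
    have hLamA : ∀ b : AddMonoidAlgebra F ℤ, Λf b.coeff = GNCF.Lam fF X b := fun b => hLam b.coeff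
    have hmΛ : Λf a * u = Λf m := by
      rw [← hΛsingle, hm]
      rw [hLam a, hLam (Finsupp.single _ _), hLamA]
      rw [map_mul]
      ring
    have hm' : ∀ k : ℤ, m k = c⁻¹ * a (k + j) := by
      intro k
      rw [hm, GNCF.single_mul]
      congr 2
      omega
    have hm0 : m 0 = 1 := by rw [hm' 0, zero_add, ← hcdef, inv_mul_cancel₀ hc]
    have hterm2 : Λf a * u - 1 = Λf (m - Finsupp.single 0 1) := by
      rw [hmΛ, hΛsub, hone]
    set s := GNCF.gSup ν r (a.erase j) with hserase
    have hsnn : 0 ≤ s := GNCF.gSup_nonneg ν r hν0' hνnn hr0 _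
    have hslt : s < t := by
      rcases eq_or_ne (a.erase j) 0 with h0 | h0
      · rw [hserase, h0, GNCF.gSup_zero ν r hν0']
        exact ht'
      · obtain ⟨i, hi, hieq, _⟩ := GNCF.gSup_exists_max ν r hν0' hνnn hr0 _ h0
        rw [Finsupp.support_erase, Finset.mem_erase] at hi
        obtain ⟨hij, hisup⟩ := hi
        rw [hserase, hieq, Finsupp.erase_ne hij]
        have hle : ν (a i) * r ^ i ≤ t := by
          rw [htdef]; exact hjmax i hisup
        refine lt_of_le_of_ne hle ?_
        rw [htdef]
        exact GNCF.irr_ne ν r hν0 hνmul hr0 hirr (a i) (a j) i j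
          (Finsupp.mem_support_iff.1 hisup) hc hij
    have hbound2 : νC (Λf (m - Finsupp.single 0 1)) ≤ s / t := by
      rw [hG]
      refine GNCF.gSup_le ν r _ fun k => ?_
      rcases eq_or_ne k 0 with rfl | hk
      · have h00 : (m - Finsupp.single 0 1 : ℤ →₀ F) 0 = 0 := by
          rw [Finsupp.sub_apply, hm0, Finsupp.single_eq_same, sub_self]
        rw [h00, hν0', zero_mul]
        exact div_nonneg hsnn ht'.le
      · have happ : (m - Finsupp.single 0 1 : ℤ →₀ F) k = c⁻¹ * a (k + j) := by
          rw [Finsupp.sub_apply, Finsupp.single_eq_of_ne' (Ne.symm hk), sub_zero, hm']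
        rw [happ, hνmul, hνcinv]
        have herase : (a.erase j) (k + j) = a (k + j) := Finsupp.erase_ne (by omega)
        have hle : ν (a (k + j)) * r ^ (k + j) ≤ s := by
          rw [hserase, ← herase]
          exact GNCF.le_gSup ν r hν0' (a.erase j) (k + j)
        have hrw : (ν c)⁻¹ * ν (a (k + j)) * r ^ k = (ν (a (k + j)) * r ^ (k + j)) / t := by
          rw [htdef, zpow_add₀ hr0.ne' k j]
          have hνc0 : ν c ≠ 0 := fun h => hc ((hν0 c).1 h)
          have hrj : r ^ j ≠ 0 := zpow_ne_zero j hr0.ne'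
          field_simp
        rw [hrw]
        gcongr
    have hbound1 : νC ((g - Λf a) * u) < 1 := by
      have hupos : 0 < νC u := by rw [hνu]; exact inv_pos.2 ht'
      calc νC ((g - Λf a) * u) ≤ νC (g - Λf a) * νC u := hνCmul _ _
        _ < t * νC u := by
            apply mul_lt_mul_of_pos_right _ hupos
            rw [← htt]; exact ha
        _ = 1 := by rw [hνu]; exact mul_inv_cancel₀ ht'.ne'
    calc νC (g * u - 1) = νC ((g - Λf a) * u + (Λf a * u - 1)) := by rw [hdecomp]
      _ ≤ max (νC ((g - Λf a) * u)) (νC (Λf a * u - 1)) := hultra _ _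
      _ < 1 := by
          refine max_lt hbound1 ?_
          rw [hterm2]
          exact hbound2.trans_lt ((div_lt_one ht').2 hslt)
  -- Step 2: splitting an element close to 1
  have split : ∀ h : C, νC (h - 1) < 1 → ∃ P P' Q Q' : C,
      P ∈ closure R₁ ∧ P' ∈ closure R₁ ∧ Q ∈ closure R₂ ∧ Q' ∈ closure R₂ ∧
      P * P' = 1 ∧ Q * Q' = 1 ∧ h = P * Q := by
    intro h hρ
    classical
    have step : ∀ z : C, ∀ δ : ℝ, 0 < δ → δ < 1 → νC (z - 1) ≤ δ →
        ∃ p : C × C × C × C,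
          νC (z * p.2.1 * p.2.2.2 - 1) ≤ δ ^ 2 ∧
          p.1 ∈ closure R₁ ∧ p.2.1 ∈ closure R₁ ∧ p.2.2.1 ∈ closure R₂ ∧
          p.2.2.2 ∈ closure R₂ ∧ p.1 * p.2.1 = 1 ∧ p.2.2.1 * p.2.2.2 = 1 ∧
          νC (p.1 - 1) ≤ δ ∧ νC (p.2.1 - 1) ≤ δ ∧ νC (p.2.2.1 - 1) ≤ δ ∧
          νC (p.2.2.2 - 1) ≤ δ := by
      intro z δ hδ0 hδ1 hz
      obtain ⟨b, hb⟩ : ∃ b : ℤ →₀ F, νC ((z - 1) - Λf b) < δ ^ 2 := by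
        obtain ⟨b, hb⟩ := Metric.denseRange_iff.1 hdense (z - 1) (δ ^ 2) (by positivity)
        exact ⟨b, by rwa [hdist] at hb⟩
      have hδ2δ : δ ^ 2 ≤ δ := by nlinarith
      have hwb : νC (Λf b) ≤ δ := by
        have h1 : Λf b = (z - 1) + (Λf b - (z - 1)) := by ring
        rw [h1]
        refine (hultra _ _).trans (max_le hz ?_)
        rw [GNCF.nu_sub_rev νC hdist]
        exact hb.le.trans hδ2δ
      set bp : ℤ →₀ F := b.filter (fun i => 0 ≤ i) with hbp
      set bm : ℤ →₀ F := b.filter (fun i => ¬ 0 ≤ i) with hbm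
      have hbsplit : bp + bm = b := Finsupp.filter_pos_add_filter_neg b _
      have hΛsplit : Λf bp + Λf bm = Λf b := by rw [← hΛadd, hbsplit]
      have hwp : νC (Λf bp) ≤ δ := by
        rw [hG, hbp]
        refine (GNCF.gSup_filter_le ν r hν0' hνnn hr0 _ b).trans ?_
        rw [← hG]; exact hwb
      have hwm : νC (Λf bm) ≤ δ := by
        rw [hG, hbm]
        refine (GNCF.gSup_filter_le ν r hν0' hνnn hr0 _ b).trans ?_
        rw [← hG]; exact hwb
      have hbpmem : Λf bp ∈ R₁ := ⟨bp, fun i hi => by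
        rw [hbp, Finsupp.filter_apply, if_neg (by omega)], rfl⟩
      have hbmmem : Λf bm ∈ R₂ := ⟨bm, fun i hi => by
        rw [hbm, Finsupp.filter_apply, if_neg (by omega)], rfl⟩
      have hAmem : (1 : C) + Λf bp ∈ R₁ := hR₁add _ hR₁one _ hbpmem
      have hBmem : (1 : C) + Λf bm ∈ R₂ := hR₂add _ hR₂one _ hbmmem
      obtain ⟨A', hA'mem, hAA', hA'1⟩ := GNCF.geom νC hdist hνCmul hultra hνC1 (closure R₁)
        isClosed_closure (subset_closure hR₁one) (hcladd R₁ hR₁add) (hclmul R₁ hR₁mul)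
        (hclneg R₁ hR₁neg) (Λf bp) (subset_closure hbpmem) (hwp.trans_lt hδ1)
      obtain ⟨B', hB'mem, hBB', hB'1⟩ := GNCF.geom νC hdist hνCmul hultra hνC1 (closure R₂)
        isClosed_closure (subset_closure hR₂one) (hcladd R₂ hR₂add) (hclmul R₂ hR₂mul)
        (hclneg R₂ hR₂neg) (Λf bm) (subset_closure hbmmem) (hwm.trans_lt hδ1)
      have hA'le1 : νC A' ≤ 1 :=
        GNCF.nu_le_one_of_close νC hultra hνC1 A' hδ1.le (hA'1.trans hwp)
      have hB'le1 : νC B' ≤ 1 :=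
        GNCF.nu_le_one_of_close νC hultra hνC1 B' hδ1.le (hB'1.trans hwm)
      refine ⟨(1 + Λf bp, A', 1 + Λf bm, B'), ?_, subset_closure hAmem, hA'mem,
        subset_closure hBmem, hB'mem, hAA', hBB',
        by rw [add_sub_cancel_left]; exact hwp, hA'1.trans hwp,
        by rw [add_sub_cancel_left]; exact hwm, hB'1.trans hwm⟩
      have h2 : νC (z - (1 + Λf bp) * (1 + Λf bm)) ≤ δ ^ 2 := by
        have hzAB : z - (1 + Λf bp) * (1 + Λf bm) = ((z - 1) - Λf b) + (-(Λf bp * Λf bm)) := by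
          rw [← hΛsplit]; ring
        rw [hzAB]
        refine (hultra _ _).trans (max_le hb.le ?_)
        rw [GNCF.nu_neg νC hdist]
        calc νC (Λf bp * Λf bm) ≤ νC (Λf bp) * νC (Λf bm) := hνCmul _ _
          _ ≤ δ * δ := mul_le_mul hwp hwm (GNCF.nu_nonneg νC hdist _) hδ0.le
          _ = δ ^ 2 := (sq δ).symm
      have heq : z * A' * B' - 1 = (z - (1 + Λf bp) * (1 + Λf bm)) * (A' * B') := by
        linear_combination ((1 + Λf bm) * B') * hAA' + hBB'
      show νC (z * A' * B' - 1) ≤ δ ^ 2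
      calc νC (z * A' * B' - 1)
          = νC ((z - (1 + Λf bp) * (1 + Λf bm)) * (A' * B')) := by rw [heq]
        _ ≤ νC (z - (1 + Λf bp) * (1 + Λf bm)) * νC (A' * B') := hνCmul _ _
        _ ≤ δ ^ 2 * 1 := by
            refine mul_le_mul h2 ?_ (GNCF.nu_nonneg νC hdist _) (by positivity)
            exact (hνCmul _ _).trans
              (mul_le_one₀ hA'le1 (GNCF.nu_nonneg νC hdist _) hB'le1)
        _ = δ ^ 2 := mul_one _
    -- iterate the step
    set δ₀ : ℝ := (νC (h - 1) + 1) / 2 with hδ₀def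
    have hρ0 : 0 ≤ νC (h - 1) := GNCF.nu_nonneg νC hdist _
    have hδ₀0 : 0 < δ₀ := by rw [hδ₀def]; linarith
    have hδ₀1 : δ₀ < 1 := by rw [hδ₀def]; linarith
    have hhδ₀ : νC (h - 1) ≤ δ₀ := by rw [hδ₀def]; linarith
    set d : ℕ → ℝ := fun n => δ₀ ^ 2 ^ n with hd
    have hd0 : ∀ n, 0 < d n := fun n => pow_pos hδ₀0 _
    have hd1 : ∀ n, d n < 1 := fun n =>
      pow_lt_one₀ hδ₀0.le hδ₀1 (pow_pos (by norm_num : (0:ℕ) < 2) n).ne'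
    have hdsq : ∀ n, d (n + 1) = d n ^ 2 := by
      intro n
      rw [hd]
      simp only
      rw [pow_succ, pow_mul]
    have hdle' : ∀ n, d n ≤ δ₀ ^ n := fun n =>
      pow_le_pow_of_le_one hδ₀0.le hδ₀1.le (Nat.lt_two_pow_self (n := n)).le
    have step' : ∀ (z : C) (δ : ℝ), ∃ p : C × C × C × C,
        0 < δ → δ < 1 → νC (z - 1) ≤ δ →
        (νC (z * p.2.1 * p.2.2.2 - 1) ≤ δ ^ 2 ∧
          p.1 ∈ closure R₁ ∧ p.2.1 ∈ closure R₁ ∧ p.2.2.1 ∈ closure R₂ ∧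
          p.2.2.2 ∈ closure R₂ ∧ p.1 * p.2.1 = 1 ∧ p.2.2.1 * p.2.2.2 = 1 ∧
          νC (p.1 - 1) ≤ δ ∧ νC (p.2.1 - 1) ≤ δ ∧ νC (p.2.2.1 - 1) ≤ δ ∧
          νC (p.2.2.2 - 1) ≤ δ) := by
      intro z δ
      by_cases hcond : 0 < δ ∧ δ < 1 ∧ νC (z - 1) ≤ δ
      · obtain ⟨p, hp⟩ := step z δ hcond.1 hcond.2.1 hcond.2.2
        exact ⟨p, fun _ _ _ => hp⟩
      · exact ⟨(1, 1, 1, 1), fun h1 h2 h3 => absurd ⟨h1, h2, h3⟩ hcond⟩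
    choose sel hsel using step'
    set W : ℕ → C := fun n =>
      Nat.rec (motive := fun _ => C) h
        (fun m z => z * (sel z (d m)).2.1 * (sel z (d m)).2.2.2) n with hWdef
    have hW0 : W 0 = h := rfl
    have hWs : ∀ n, W (n + 1) = W n * (sel (W n) (d n)).2.1 * (sel (W n) (d n)).2.2.2 := by
      intro n
      rw [hWdef]
    have hWinv : ∀ n, νC (W n - 1) ≤ d n := by
      intro n
      induction n with
      | zero =>
          rw [hW0]
          have hd00 : d 0 = δ₀ := by rw [hd]; norm_num
          rw [hd00]
          exact hhδ₀
      | succ n ih =>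
          have h5 := hsel (W n) (d n) (hd0 n) (hd1 n) ih
          rw [hWs n, hdsq n]
          exact h5.1
    have hgood := fun n => hsel (W n) (d n) (hd0 n) (hd1 n) (hWinv n)
    have hAmem : ∀ n, (sel (W n) (d n)).1 ∈ closure R₁ := fun n => (hgood n).2.1
    have hA'mem : ∀ n, (sel (W n) (d n)).2.1 ∈ closure R₁ := fun n => (hgood n).2.2.1
    have hBmem : ∀ n, (sel (W n) (d n)).2.2.1 ∈ closure R₂ := fun n => (hgood n).2.2.2.1
    have hB'mem : ∀ n, (sel (W n) (d n)).2.2.2 ∈ closure R₂ := fun n => (hgood n).2.2.2.2.1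
    have hAA' : ∀ n, (sel (W n) (d n)).1 * (sel (W n) (d n)).2.1 = 1 :=
      fun n => (hgood n).2.2.2.2.2.1
    have hBB' : ∀ n, (sel (W n) (d n)).2.2.1 * (sel (W n) (d n)).2.2.2 = 1 :=
      fun n => (hgood n).2.2.2.2.2.2.1
    have hAb : ∀ n, νC ((sel (W n) (d n)).1 - 1) ≤ d n :=
      fun n => (hgood n).2.2.2.2.2.2.2.1
    have hA'b : ∀ n, νC ((sel (W n) (d n)).2.1 - 1) ≤ d n :=
      fun n => (hgood n).2.2.2.2.2.2.2.2.1
    have hBb : ∀ n, νC ((sel (W n) (d n)).2.2.1 - 1) ≤ d n :=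
      fun n => (hgood n).2.2.2.2.2.2.2.2.2.1
    have hB'b : ∀ n, νC ((sel (W n) (d n)).2.2.2 - 1) ≤ d n :=
      fun n => (hgood n).2.2.2.2.2.2.2.2.2.2
    have prodconv : ∀ (u : ℕ → C) (T : Set C), IsClosed T → (1 : C) ∈ T →
        (∀ x ∈ T, ∀ y ∈ T, x * y ∈ T) → (∀ n, u n ∈ T) → (∀ n, νC (u n - 1) ≤ d n) →
        ∃ L ∈ T, Tendsto (fun n => ∏ k ∈ Finset.range n, u k) atTop (𝓝 L) := by
      intro u T hTc hT1 hTmul hu hub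
      have hu1 : ∀ n, νC (u n) ≤ 1 := fun n =>
        GNCF.nu_le_one_of_close νC hultra hνC1 (u n) (hd1 n).le (hub n)
      have hP1 : ∀ n, νC (∏ k ∈ Finset.range n, u k) ≤ 1 := by
        intro n
        induction n with
        | zero => rw [Finset.prod_range_zero, hνC1]
        | succ n ih =>
            rw [Finset.prod_range_succ]
            exact (hνCmul _ _).trans
              (mul_le_one₀ ih (GNCF.nu_nonneg νC hdist _) (hu1 n))
      have hPmem : ∀ n, (∏ k ∈ Finset.range n, u k) ∈ T := by
        intro n
        induction n with
        | zero => rw [Finset.prod_range_zero]; exact hT1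
        | succ n ih => rw [Finset.prod_range_succ]; exact hTmul _ ih _ (hu n)
      have hcauchy : CauchySeq (fun n => ∏ k ∈ Finset.range n, u k) := by
        apply cauchySeq_of_le_geometric δ₀ 1 hδ₀1
        intro n
        rw [hdist]
        have hprod : (∏ k ∈ Finset.range n, u k) - (∏ k ∈ Finset.range (n + 1), u k)
            = (∏ k ∈ Finset.range n, u k) * (1 - u n) := by
          rw [Finset.prod_range_succ]; ring
        rw [hprod]
        calc νC ((∏ k ∈ Finset.range n, u k) * (1 - u n))
            ≤ νC (∏ k ∈ Finset.range n, u k) * νC (1 - u n) := hνCmul _ _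
          _ ≤ 1 * δ₀ ^ n := by
              refine mul_le_mul (hP1 n) ?_ (GNCF.nu_nonneg νC hdist _) zero_le_one
              rw [show (1 : C) - u n = -(u n - 1) by ring, GNCF.nu_neg νC hdist]
              exact (hub n).trans (hdle' n)
      obtain ⟨L, hL⟩ := cauchySeq_tendsto_of_complete hcauchy
      exact ⟨L, hTc.mem_of_tendsto hL (Filter.Eventually.of_forall hPmem), hL⟩
    obtain ⟨P, hPmem, hPlim⟩ := prodconv (fun n => (sel (W n) (d n)).1) (closure R₁)
      isClosed_closure (subset_closure hR₁one) (hclmul R₁ hR₁mul) hAmem hAb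
    obtain ⟨P', hP'mem, hP'lim⟩ := prodconv (fun n => (sel (W n) (d n)).2.1) (closure R₁)
      isClosed_closure (subset_closure hR₁one) (hclmul R₁ hR₁mul) hA'mem hA'b
    obtain ⟨Q, hQmem, hQlim⟩ := prodconv (fun n => (sel (W n) (d n)).2.2.1) (closure R₂)
      isClosed_closure (subset_closure hR₂one) (hclmul R₂ hR₂mul) hBmem hBb
    obtain ⟨Q', hQ'mem, hQ'lim⟩ := prodconv (fun n => (sel (W n) (d n)).2.2.2) (closure R₂)
      isClosed_closure (subset_closure hR₂one) (hclmul R₂ hR₂mul) hB'mem hB'b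
    have hPP' : P * P' = 1 := by
      have h1 := GNCF.tendsto_mul νC hdist hνCmul hPlim hP'lim
      have h2 : ∀ n, (∏ k ∈ Finset.range n, (sel (W k) (d k)).1) *
          (∏ k ∈ Finset.range n, (sel (W k) (d k)).2.1) = 1 := by
        intro n
        rw [← Finset.prod_mul_distrib]
        exact Finset.prod_eq_one fun k _ => hAA' k
      exact tendsto_nhds_unique (by simpa only [h2] using h1) tendsto_const_nhds
    have hQQ' : Q * Q' = 1 := by
      have h1 := GNCF.tendsto_mul νC hdist hνCmul hQlim hQ'lim
      have h2 : ∀ n, (∏ k ∈ Finset.range n, (sel (W k) (d k)).2.2.1) *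
          (∏ k ∈ Finset.range n, (sel (W k) (d k)).2.2.2) = 1 := by
        intro n
        rw [← Finset.prod_mul_distrib]
        exact Finset.prod_eq_one fun k _ => hBB' k
      exact tendsto_nhds_unique (by simpa only [h2] using h1) tendsto_const_nhds
    have hWlim : Tendsto W atTop (𝓝 1) := by
      rw [tendsto_iff_dist_tendsto_zero]
      apply squeeze_zero (fun n => dist_nonneg) (g := fun n => δ₀ ^ n)
      · intro n
        rw [hdist]
        exact (hWinv n).trans (hdle' n)
      · exact tendsto_pow_atTop_nhds_zero_of_lt_one hδ₀0.le hδ₀1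
    have hPQW : ∀ n, (∏ k ∈ Finset.range n, (sel (W k) (d k)).1) *
        (∏ k ∈ Finset.range n, (sel (W k) (d k)).2.2.1) * W n = h := by
      intro n
      induction n with
      | zero => simp [hW0]
      | succ n ih =>
          rw [Finset.prod_range_succ, Finset.prod_range_succ, hWs n]
          linear_combination
            ((∏ k ∈ Finset.range n, (sel (W k) (d k)).1) *
              (∏ k ∈ Finset.range n, (sel (W k) (d k)).2.2.1) * W n *
              (sel (W n) (d n)).2.2.1 * (sel (W n) (d n)).2.2.2) * hAA' n +
            ((∏ k ∈ Finset.range n, (sel (W k) (d k)).1) *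
              (∏ k ∈ Finset.range n, (sel (W k) (d k)).2.2.1) * W n) * hBB' n + ih
    have hhPQ : h = P * Q := by
      have h1 := GNCF.tendsto_mul νC hdist hνCmul
        (GNCF.tendsto_mul νC hdist hνCmul hPlim hQlim) hWlim
      have h2 := tendsto_nhds_unique (by simpa only [hPQW] using h1) tendsto_const_nhds
      rw [← h2, mul_one]
    exact ⟨P, P', Q, Q', hPmem, hP'mem, hQmem, hQ'mem, hPP', hQQ', hhPQ⟩
  -- assembly
  have fact : ∀ g : C, g ≠ 0 → ∃ (i : ℤ) (g₁ g₂ : C),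
      g = ((X ^ i : Cˣ) : C) * g₁ * g₂ ∧
      g₁ ∈ closure R₁ ∧ (∃ h₁ ∈ closure R₁, g₁ * h₁ = 1) ∧
      g₂ ∈ closure R₂ ∧ (∃ h₂ ∈ closure R₂, g₂ * h₂ = 1) := by
    intro g hg
    obtain ⟨j, c, hc, hclose⟩ := key g hg
    obtain ⟨P, P', Q, Q', hP, hP', hQ, hQ', hPP', hQQ', hPQ⟩ := split _ hclose
    have hcc : fF c * fF c⁻¹ = 1 := by
      rw [← map_mul, mul_inv_cancel₀ hc, map_one]
    have hXX : ((X ^ j : Cˣ) : C) * ((X ^ (-j) : Cˣ) : C) = 1 := by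
      rw [← Units.val_mul, ← zpow_add, add_neg_cancel, zpow_zero, Units.val_one]
    have hfFc₁ : fF c ∈ R₁ := ⟨Finsupp.single 0 c,
      fun i hi => Finsupp.single_eq_of_ne (by omega), by rw [hsingle]; simp⟩
    have hfFcinv₁ : fF c⁻¹ ∈ R₁ := ⟨Finsupp.single 0 c⁻¹,
      fun i hi => Finsupp.single_eq_of_ne (by omega), by rw [hsingle]; simp⟩
    refine ⟨j, fF c * P, Q, ?_, hclmul R₁ hR₁mul _ (subset_closure hfFc₁) _ hP,
      ⟨fF c⁻¹ * P', hclmul R₁ hR₁mul _ (subset_closure hfFcinv₁) _ hP', ?_⟩, hQ,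
      ⟨Q', hQ', hQQ'⟩⟩
    · have h1 : ((X ^ j : Cˣ) : C) * (fF c * P) * Q =
          (P * Q) * (fF c * ((X ^ j : Cˣ) : C)) := by ring
      rw [h1, ← hPQ]
      symm
      calc g * fF c⁻¹ * ((X ^ (-j) : Cˣ) : C) * (fF c * ((X ^ j : Cˣ) : C))
          = g * (fF c * fF c⁻¹) * (((X ^ j : Cˣ) : C) * ((X ^ (-j) : Cˣ) : C)) := by ring
        _ = g := by rw [hcc, hXX, mul_one, mul_one]
    · calc fF c * P * (fF c⁻¹ * P') = (fF c * fF c⁻¹) * (P * P') := by ring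
        _ = 1 := by rw [hcc, hPP', mul_one]
  constructor
  · exact fact
  · refine ⟨⟨0, 1, ?_⟩, mul_comm, ?_⟩
    · intro h01
      have : νC (1 : C) = 0 := by rw [← h01, (GNCF.nu_eq_zero νC hdist 0).2 rfl]
      rw [hνC1] at this
      exact one_ne_zero this
    · intro g hg
      obtain ⟨i, g₁, g₂, hgeq, _, ⟨h₁, _, hgh₁⟩, _, ⟨h₂, _, hgh₂⟩⟩ := fact g hg
      refine ⟨((X ^ (-i) : Cˣ) : C) * h₁ * h₂, ?_⟩
      have hXX : ((X ^ i : Cˣ) : C) * ((X ^ (-i) : Cˣ) : C) = 1 := by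
        rw [← Units.val_mul, ← zpow_add, add_neg_cancel, zpow_zero, Units.val_one]
      calc g * (((X ^ (-i) : Cˣ) : C) * h₁ * h₂)
          = ((X ^ i : Cˣ) : C) * g₁ * g₂ * (((X ^ (-i) : Cˣ) : C) * h₁ * h₂) := by rw [← hgeq]
        _ = (((X ^ i : Cˣ) : C) * ((X ^ (-i) : Cˣ) : C)) * (g₁ * h₁) * (g₂ * h₂) := by ring
        _ = 1 := by rw [hXX, hgh₁, hgh₂, one_mul, mul_one]
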